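/- Let (X, Σ, μ) be a measure space with μ(X) < ∞, and for each u ∈ S^{n-1} let D_u ∈ Σ. Suppose there exists a Borel set S ⊆ S^{n-1} with H^{n-1}(S) > 0 such that μ(D_u) > 0 for every u ∈ S. Then there exist n linearly independent vectors u₁, ..., u_n ∈ S such that μ(D_{u₁} ∩ ⋯ ∩ D_{u_n}) > 0. -/

import Mathlib

open MeasureTheory Set
open scoped ENNReal NNReal


lemma sphereNull (m : ℕ) :
    μH[(m:ℝ)] (Metric.sphere (0 : EuclideanSpace ℝ (Fin m)) 1) = 0 := by
  rcases Nat.eq_zero_or_pos m with rfl | hm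
  · have : (Metric.sphere (0 : EuclideanSpace ℝ (Fin 0)) 1) = ∅ := by
      ext x
      simp [Subsingleton.elim x 0]
    simp [this]
  · haveI : Nontrivial (EuclideanSpace ℝ (Fin m)) := by
      refine ⟨0, EuclideanSpace.single ⟨0, hm⟩ 1, ?_⟩
      intro h
      have := congrArg (fun f => f ⟨0, hm⟩) h
      simp at this
    set φ : EuclideanSpace ℝ (Fin m) → (Fin m → ℝ) := ⇑(WithLp.equiv 2 (Fin m → ℝ)) with hφ
    have hanti : AntilipschitzWith _ φ := PiLp.antilipschitzWith_ofLp 2 _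
    have h0 : (0:ℝ) ≤ (m:ℝ) := by positivity
    have h1 := hanti.le_hausdorffMeasure_image h0 (Metric.sphere (0 : EuclideanSpace ℝ (Fin m)) 1)
    have h2 : μH[(m:ℝ)] (φ '' Metric.sphere (0 : EuclideanSpace ℝ (Fin m)) 1)
        = volume (φ '' Metric.sphere (0 : EuclideanSpace ℝ (Fin m)) 1) := by
      have := hausdorffMeasure_pi_real (ι := Fin m)
      simp only [Fintype.card_fin] at this
      rw [this]
    have hmeas : MeasurableSet (Metric.sphere (0 : EuclideanSpace ℝ (Fin m)) 1) :=
      Metric.isClosed_sphere.measurableSet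
    have h3 : volume (φ '' Metric.sphere (0 : EuclideanSpace ℝ (Fin m)) 1)
        = volume (Metric.sphere (0 : EuclideanSpace ℝ (Fin m)) 1) := by
      have hmp := EuclideanSpace.volume_preserving_symm_measurableEquiv_toLp (Fin m)
      have himg : φ '' Metric.sphere (0 : EuclideanSpace ℝ (Fin m)) 1
          = (MeasurableEquiv.toLp 2 (Fin m → ℝ)).symm '' Metric.sphere (0 : EuclideanSpace ℝ (Fin m)) 1 := rfl
      rw [himg, MeasurableEquiv.image_eq_preimage_symm]
      exact (hmp.symm (MeasurableEquiv.toLp 2 (Fin m → ℝ)).symm).measure_preimage hmeas.nullMeasurableSet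
    have h4 : volume (Metric.sphere (0 : EuclideanSpace ℝ (Fin m)) 1) = 0 :=
      Measure.addHaar_sphere volume 0 1
    rw [h2, h3, h4, mul_zero] at h1
    exact le_antisymm h1 zero_le

lemma subspaceSphereNull {n : ℕ} (hn : 1 ≤ n) (W : Submodule ℝ (EuclideanSpace ℝ (Fin n)))
    (hW : W ≠ ⊤) :
    μH[(n:ℝ)-1] ((W : Set (EuclideanSpace ℝ (Fin n))) ∩ Metric.sphere 0 1) = 0 := by
  have h0 : (0:ℝ) ≤ (n:ℝ) - 1 := by
    have : (1:ℝ) ≤ (n:ℝ) := by exact_mod_cast hn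
    linarith
  set m := Module.finrank ℝ W with hm
  have hmlt : m < n := by
    have := Submodule.finrank_lt hW
    simpa [finrank_euclideanSpace_fin] using this
  have himg : (W : Set (EuclideanSpace ℝ (Fin n))) ∩ Metric.sphere 0 1
      = (Subtype.val) '' (Metric.sphere (0:W) 1) := by
    ext x
    constructor
    · rintro ⟨h1, h2⟩
      refine ⟨⟨x, h1⟩, ?_, rfl⟩
      simp only [Metric.mem_sphere] at h2 ⊢
      simpa [dist_eq_norm] using h2
    · rintro ⟨⟨y, hy⟩, hy1, rfl⟩
      refine ⟨hy, ?_⟩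
      simp only [Metric.mem_sphere] at hy1 ⊢
      simpa [dist_eq_norm] using hy1
  have hiso : Isometry ((↑) : W → EuclideanSpace ℝ (Fin n)) := isometry_subtype_coe
  rw [himg, hiso.hausdorffMeasure_image (Or.inl h0)]
  set e : W ≃ₗᵢ[ℝ] EuclideanSpace ℝ (Fin m) := (stdOrthonormalBasis ℝ W).repr with he
  have h1 : μH[(n:ℝ)-1] (Metric.sphere (0:W) 1)
      = μH[(n:ℝ)-1] (⇑e '' Metric.sphere (0:W) 1) :=
    (e.isometry.hausdorffMeasure_image (Or.inl h0) _).symm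
  have h2 : ⇑e '' Metric.sphere (0:W) 1 = Metric.sphere (0 : EuclideanSpace ℝ (Fin m)) 1 := by
    have := e.toIsometryEquiv.image_sphere 0 1
    simpa using this
  rw [h1, h2]
  have h3 : μH[(n:ℝ)-1] (Metric.sphere (0 : EuclideanSpace ℝ (Fin m)) 1)
      ≤ μH[(m:ℝ)] (Metric.sphere (0 : EuclideanSpace ℝ (Fin m)) 1) := by
    apply MeasureTheory.Measure.hausdorffMeasure_mono
    have : (m:ℝ) + 1 ≤ (n:ℝ) := by exact_mod_cast hmlt
    linarith
  exact le_antisymm (by simpa [sphereNull m] using h3) zero_le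

lemma avoid {n : ℕ} (hn : 1 ≤ n) {S' : Set (EuclideanSpace ℝ (Fin n))}
    (hsub : S' ⊆ Metric.sphere 0 1) (hpos : 0 < μH[(n:ℝ)-1] S')
    (G : Finset (Submodule ℝ (EuclideanSpace ℝ (Fin n)))) (hG : ∀ W ∈ G, W ≠ ⊤) :
    ∃ u ∈ S', ∀ W ∈ G, u ∉ W := by
  by_contra hcon
  push_neg at hcon
  have hcover : S' ⊆ ⋃ W ∈ G, ((W : Set (EuclideanSpace ℝ (Fin n))) ∩ Metric.sphere 0 1) := by
    intro u hu
    obtain ⟨W, hWG, hWu⟩ := hcon u hu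
    exact Set.mem_biUnion hWG ⟨hWu, hsub hu⟩
  have hnull : μH[(n:ℝ)-1] (⋃ W ∈ G, ((W : Set (EuclideanSpace ℝ (Fin n))) ∩ Metric.sphere 0 1)) = 0 :=
    (measure_biUnion_null_iff G.countable_toSet).2 fun W hW => subspaceSphereNull hn W (hG W hW)
  exact absurd (le_trans (measure_mono hcover) hnull.le) (not_le.mpr hpos)


lemma spanNeTop {n : ℕ} (hn : 1 ≤ n) (c : Finset (EuclideanSpace ℝ (Fin n)))
    (hc : c.card ≤ n - 1) :
    Submodule.span ℝ (c : Set (EuclideanSpace ℝ (Fin n))) ≠ ⊤ := by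
  intro h
  have h1 : Module.finrank ℝ (Submodule.span ℝ (c : Set (EuclideanSpace ℝ (Fin n)))) ≤ c.card :=
    finrank_span_finset_le_card c
  rw [h, finrank_top, finrank_euclideanSpace_fin] at h1
  omega

lemma liOfIio {V : Type*} [AddCommGroup V] [Module ℝ V] :
    ∀ (m : ℕ) (v : Fin m → V),
      (∀ i, v i ∉ Submodule.span ℝ (v '' {j | j < i})) → LinearIndependent ℝ v := by
  intro m
  induction m with
  | zero => intro v _; exact linearIndependent_empty_type
  | succ m ih =>
    intro v hv
    rw [← Fin.snoc_init_self v, linearIndependent_fin_snoc]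
    constructor
    · apply ih
      intro i
      have h := hv i.castSucc
      have himg : Fin.init v '' {j | j < i} = v '' {j | j < i.castSucc} := by
        ext x
        constructor
        · rintro ⟨j, hj, rfl⟩
          exact ⟨j.castSucc, by simpa using hj, rfl⟩
        · rintro ⟨j, hj, rfl⟩
          have hjm : (j : ℕ) < m := lt_of_lt_of_le (Fin.lt_def.mp hj) (by simpa using i.is_le)
          have hcs : (⟨(j : ℕ), hjm⟩ : Fin m).castSucc = j := Fin.ext rfl
          refine ⟨⟨(j : ℕ), hjm⟩, ?_, by simp [Fin.init, hcs]⟩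
          show (⟨(j : ℕ), hjm⟩ : Fin m) < i
          rw [Fin.lt_def]
          simpa [Fin.lt_def] using hj
      rw [himg]
      exact h
    · have h := hv (Fin.last m)
      have himg : Set.range (Fin.init v) = v '' {j | j < Fin.last m} := by
        ext x
        constructor
        · rintro ⟨j, rfl⟩
          exact ⟨j.castSucc, by simp [Fin.lt_def, j.isLt], rfl⟩
        · rintro ⟨j, hj, rfl⟩
          have hjm : (j : ℕ) < m := by simpa [Fin.lt_def] using hj
          have hcs : (⟨(j : ℕ), hjm⟩ : Fin m).castSucc = j := Fin.ext rfl
          exact ⟨⟨(j : ℕ), hjm⟩, by simp [Fin.init, hcs]⟩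
      rw [himg]
      exact h

lemma build {n : ℕ} (hn : 1 ≤ n) {S' : Set (EuclideanSpace ℝ (Fin n))}
    (hsub : S' ⊆ Metric.sphere 0 1) (hpos : 0 < μH[(n:ℝ)-1] S') (N : ℕ) :
    ∃ w : Fin N → EuclideanSpace ℝ (Fin n),
      (∀ i, w i ∈ S') ∧
      ∀ (i : Fin N) (c : Finset (EuclideanSpace ℝ (Fin n))),
        (↑c ⊆ w '' {j | j < i}) → c.card ≤ n - 1 →
        w i ∉ Submodule.span ℝ (c : Set (EuclideanSpace ℝ (Fin n))) := by
  classical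
  induction N with
  | zero => exact ⟨Fin.elim0, fun i => i.elim0, fun i => i.elim0⟩
  | succ N ih =>
    obtain ⟨w, hwS, hw⟩ := ih
    set img : Finset (EuclideanSpace ℝ (Fin n)) := Finset.univ.image w with himg
    set G : Finset (Submodule ℝ (EuclideanSpace ℝ (Fin n))) :=
      (img.powerset.filter (fun c => c.card ≤ n - 1)).image
        (fun c : Finset (EuclideanSpace ℝ (Fin n)) =>
          Submodule.span ℝ ((c : Set (EuclideanSpace ℝ (Fin n))))) with hGdef
    have hG : ∀ W ∈ G, W ≠ ⊤ := by
      intro W hW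
      rw [hGdef, Finset.mem_image] at hW
      obtain ⟨c, hc, rfl⟩ := hW
      rw [Finset.mem_filter] at hc
      exact spanNeTop hn c hc.2
    obtain ⟨x, hxS, hx⟩ := avoid hn hsub hpos G hG
    refine ⟨Fin.snoc w x, ?_, ?_⟩
    · intro i
      induction i using Fin.lastCases with
      | last => simpa using hxS
      | cast i₀ => simpa using hwS i₀
    · intro i c hc hcard
      induction i using Fin.lastCases with
      | last =>
        have hcsub : c ⊆ img := by
          intro y hy
          obtain ⟨j, hj, rfl⟩ := hc hy
          have hjne : j ≠ Fin.last N := ne_of_lt hj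
          obtain ⟨j₀, rfl⟩ := Fin.exists_castSucc_eq.mpr hjne
          rw [himg, Finset.mem_image]
          exact ⟨j₀, Finset.mem_univ _, (by exact (Fin.snoc_castSucc (α := fun _ : Fin (N+1) => EuclideanSpace ℝ (Fin n)) x w j₀).symm)⟩
        have hmem : Submodule.span ℝ (c : Set (EuclideanSpace ℝ (Fin n))) ∈ G := by
          rw [hGdef, Finset.mem_image]
          exact ⟨c, Finset.mem_filter.mpr ⟨Finset.mem_powerset.mpr hcsub, hcard⟩, rfl⟩
        simpa using hx _ hmem
      | cast i₀ =>
        have hsub2 : ↑c ⊆ w '' {j | j < i₀} := by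
          intro y hy
          obtain ⟨j, hj, rfl⟩ := hc hy
          have hjne : j ≠ Fin.last N :=
            ne_of_lt (lt_of_lt_of_le hj (Fin.le_last _))
          obtain ⟨j₀, rfl⟩ := Fin.exists_castSucc_eq.mpr hjne
          refine ⟨j₀, ?_, (by exact (Fin.snoc_castSucc (α := fun _ : Fin (N+1) => EuclideanSpace ℝ (Fin n)) x w j₀).symm)⟩
          show j₀ < i₀
          exact Fin.castSucc_lt_castSucc_iff.mp hj
        have := hw i₀ c hsub2 hcard
        simpa using this

lemma pigeon {X : Type*} [MeasurableSpace X] (μ : Measure X) [IsFiniteMeasure μ]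
    {n N : ℕ} (hn : 1 ≤ n) (A : Fin N → Set X) (hA : ∀ i, MeasurableSet (A i))
    (ε : ℝ≥0∞) (hε : ∀ i, ε ≤ μ (A i)) (hN : (n : ℝ≥0∞) * μ Set.univ < N * ε) :
    ∃ T : Finset (Fin N), T.card = n ∧ 0 < μ (⋂ i ∈ T, A i) := by
  classical
  set f : X → ℕ := fun x => (Finset.univ.filter (fun i => x ∈ A i)).card with hf
  set E₀ : Set X := ⋃ T ∈ Finset.univ.powersetCard n (α := Fin N), ⋂ i ∈ T, A i with hE
  have hE₀m : MeasurableSet E₀ :=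
    MeasurableSet.biUnion (Finset.univ.powersetCard n).countable_toSet
      (fun T _ => MeasurableSet.biInter T.countable_toSet (fun i _ => hA i))
  have hfN : ∀ x, f x ≤ N := by
    intro x
    calc f x ≤ Finset.univ.card := Finset.card_filter_le _ _
    _ = N := by simp
  have hmem : ∀ x, n ≤ f x → x ∈ E₀ := by
    intro x hx
    obtain ⟨T, hTsub, hTcard⟩ := Finset.exists_subset_card_eq hx
    refine Set.mem_biUnion (Finset.mem_powersetCard.mpr ⟨Finset.subset_univ _, hTcard⟩) ?_
    refine Set.mem_biInter fun i hi => ?_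
    have := hTsub hi
    simpa using (Finset.mem_filter.mp this).2
  have key : ∀ x, (f x : ℝ≥0∞) ≤ ((n-1 : ℕ) : ℝ≥0∞) + N * E₀.indicator (fun _ => 1) x := by
    intro x
    by_cases hx : x ∈ E₀
    · rw [Set.indicator_of_mem hx]
      calc (f x : ℝ≥0∞) ≤ N := by exact_mod_cast hfN x
      _ ≤ ((n-1:ℕ):ℝ≥0∞) + N * 1 := by simp
    · rw [Set.indicator_of_notMem hx]
      have : f x ≤ n - 1 := by
        by_contra hcon
        exact hx (hmem x (by omega))
      simp only [mul_zero, add_zero]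
      exact_mod_cast this
  have hsum : ∫⁻ x, (f x : ℝ≥0∞) ∂μ = ∑ i, μ (A i) := by
    have heq : ∀ x, (f x : ℝ≥0∞) = ∑ i, (A i).indicator (fun _ => (1:ℝ≥0∞)) x := by
      intro x
      rw [hf]
      simp only [Finset.card_filter, Nat.cast_sum]
      refine Finset.sum_congr rfl fun i _ => ?_
      by_cases h : x ∈ A i <;> simp [h]
    rw [lintegral_congr heq,
      lintegral_finset_sum _ (fun i _ => (measurable_const.indicator (hA i)))]
    congr 1
    ext i
    rw [lintegral_indicator (hA i)]
    simp
  have hlow : (N : ℝ≥0∞) * ε ≤ ∫⁻ x, (f x : ℝ≥0∞) ∂μ := by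
    rw [hsum]
    calc (N:ℝ≥0∞) * ε = ∑ _i : Fin N, ε := by simp [Finset.sum_const, mul_comm]
    _ ≤ ∑ i, μ (A i) := Finset.sum_le_sum fun i _ => hε i
  have hupp : ∫⁻ x, (f x : ℝ≥0∞) ∂μ ≤ ((n-1:ℕ):ℝ≥0∞) * μ Set.univ + N * μ E₀ := by
    calc ∫⁻ x, (f x : ℝ≥0∞) ∂μ
        ≤ ∫⁻ x, (((n-1 : ℕ):ℝ≥0∞) + N * E₀.indicator (fun _ => 1) x) ∂μ := lintegral_mono key
    _ = ((n-1:ℕ):ℝ≥0∞) * μ Set.univ + N * μ E₀ := by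
        rw [lintegral_add_left measurable_const,
          lintegral_const_mul _ (measurable_const.indicator hE₀m),
          lintegral_indicator hE₀m, lintegral_const]
        simp
  by_contra hcon
  push_neg at hcon
  have hzero : μ E₀ = 0 := by
    rw [hE]
    refine le_antisymm ?_ zero_le
    refine le_trans (measure_biUnion_finset_le _ _) ?_
    refine le_of_eq (Finset.sum_eq_zero fun T hT => ?_)
    have hc := (Finset.mem_powersetCard.mp hT).2
    exact le_antisymm (hcon T hc) zero_le
  have : (N:ℝ≥0∞) * ε ≤ ((n-1:ℕ):ℝ≥0∞) * μ Set.univ := by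
    have := le_trans hlow hupp
    rwa [hzero, mul_zero, add_zero] at this
  have hlt : ((n-1:ℕ):ℝ≥0∞) * μ Set.univ < (N:ℝ≥0∞) * ε := by
    refine lt_of_le_of_lt ?_ hN
    gcongr
    exact_mod_cast Nat.sub_le n 1
  exact absurd this (not_le.mpr hlt)


theorem stmt4 {n : ℕ} {X : Type*} [MeasurableSpace X] (μ : Measure X)
    [IsFiniteMeasure μ]
    (S : Set (EuclideanSpace ℝ (Fin n))) (hSm : MeasurableSet S)
    (hSsub : S ⊆ Metric.sphere (0 : EuclideanSpace ℝ (Fin n)) 1)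
    (hSpos : 0 < μH[((n : ℝ) - 1)] S)
    (D : EuclideanSpace ℝ (Fin n) → Set X) (hDm : ∀ u, MeasurableSet (D u))
    (hDpos : ∀ u ∈ S, 0 < μ (D u)) :
    ∃ u : Fin n → EuclideanSpace ℝ (Fin n),
      (∀ i, u i ∈ S) ∧ LinearIndependent ℝ u ∧ 0 < μ (⋂ i, D (u i)) := by
  classical
  -- n = 0 is impossible
  rcases Nat.eq_zero_or_pos n with rfl | hn
  · exfalso
    have hS0 : S = ∅ := by
      rcases Set.eq_empty_or_nonempty S with h | ⟨u, hu⟩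
      · exact h
      · exfalso
        have h1 : ‖u‖ = 1 := by simpa [dist_eq_norm] using hSsub hu
        have h0 : u = 0 := Subsingleton.elim u 0
        rw [h0] at h1
        simp at h1
    rw [hS0] at hSpos
    simp at hSpos
  -- find a level set with positive Hausdorff measure
  have hSS : S ⊆ ⋃ k : ℕ, {u | u ∈ S ∧ ((k:ℝ≥0∞)+1)⁻¹ ≤ μ (D u)} := by
    intro u hu
    obtain ⟨k, hk⟩ := ENNReal.exists_inv_nat_lt (hDpos u hu).ne'
    refine Set.mem_iUnion.mpr ⟨k, hu, le_trans ?_ hk.le⟩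
    gcongr
    exact le_self_add
  have hex : ∃ k : ℕ, 0 < μH[(n:ℝ)-1] {u | u ∈ S ∧ ((k:ℝ≥0∞)+1)⁻¹ ≤ μ (D u)} := by
    by_contra hcon
    push_neg at hcon
    have h0 : μH[(n:ℝ)-1] (⋃ k : ℕ, {u | u ∈ S ∧ ((k:ℝ≥0∞)+1)⁻¹ ≤ μ (D u)}) = 0 :=
      measure_iUnion_null fun k => le_antisymm (hcon k) zero_le
    exact absurd (le_trans (measure_mono hSS) h0.le) (not_le.mpr hSpos)
  obtain ⟨k, hk⟩ := hex
  set ε : ℝ≥0∞ := ((k:ℝ≥0∞)+1)⁻¹ with hεdef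
  set S' : Set (EuclideanSpace ℝ (Fin n)) := {u | u ∈ S ∧ ε ≤ μ (D u)} with hS'def
  have hS'sub : S' ⊆ Metric.sphere (0 : EuclideanSpace ℝ (Fin n)) 1 := fun u hu => hSsub hu.1
  have hε0 : ε ≠ 0 := by
    rw [hεdef]
    simp [ENNReal.inv_ne_zero]
  have hεtop : ε ≠ ⊤ := by
    rw [hεdef]
    simp
  -- choose N large enough
  have hμtop : (n : ℝ≥0∞) * μ Set.univ ≠ ⊤ :=
    ENNReal.mul_ne_top (by simp) (measure_ne_top μ _)
  obtain ⟨N, hN⟩ := ENNReal.exists_nat_gt (ENNReal.div_lt_top hμtop hε0).ne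
  have hNε : (n : ℝ≥0∞) * μ Set.univ < N * ε := by
    have h1 : (n : ℝ≥0∞) * μ Set.univ = ((n : ℝ≥0∞) * μ Set.univ) / ε * ε :=
      (ENNReal.div_mul_cancel hε0 hεtop).symm
    rw [h1]
    exact (ENNReal.mul_lt_mul_iff_left hε0 hεtop).mpr hN
  -- build the vectors
  obtain ⟨w, hwS, hw⟩ := build hn hS'sub hk N
  -- pigeonhole
  obtain ⟨T, hTcard, hTpos⟩ :=
    pigeon μ hn (fun i => D (w i)) (fun i => hDm _) ε (fun i => (hwS i).2) hNε
  set e := T.orderEmbOfFin hTcard with hedef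
  refine ⟨fun i => w (e i), fun i => (hwS (e i)).1, ?_, ?_⟩
  · -- linear independence
    apply liOfIio
    intro i
    set u : Fin n → EuclideanSpace ℝ (Fin n) := fun i => w (e i) with hudef
    set c : Finset (EuclideanSpace ℝ (Fin n)) :=
      (Finset.univ.filter (fun j => j < i)).image u with hcdef
    have hccoe : (c : Set (EuclideanSpace ℝ (Fin n))) = u '' {j | j < i} := by
      rw [hcdef]
      simp
    have hcard : c.card ≤ n - 1 := by
      have h1 : c.card ≤ (Finset.univ.filter (fun j => j < i)).card :=
        Finset.card_image_le
      have h2 : (Finset.univ.filter (fun j => j < i)) ⊆ Finset.univ.erase i := by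
        intro j hj
        refine Finset.mem_erase.mpr ⟨ne_of_lt (Finset.mem_filter.mp hj).2, Finset.mem_univ _⟩
      have h3 := Finset.card_le_card h2
      rw [Finset.card_erase_of_mem (Finset.mem_univ _)] at h3
      simpa using le_trans h1 (le_trans h3 (by simp))
    have hsubw : (c : Set (EuclideanSpace ℝ (Fin n))) ⊆ w '' {j' | j' < e i} := by
      rw [hccoe]
      rintro y ⟨j, hj, rfl⟩
      exact ⟨e j, (Finset.orderEmbOfFin T hTcard).strictMono hj, rfl⟩
    have := hw (e i) c hsubw hcard
    rw [← hccoe]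
    exact this
  · -- positive measure of the intersection
    have hiInt : (⋂ i, D (w (e i))) = ⋂ j ∈ T, D (w j) := by
      ext x
      simp only [Set.mem_iInter]
      constructor
      · intro h j hj
        have : j ∈ Set.range e := by
          rw [hedef, Finset.range_orderEmbOfFin]
          exact hj
        obtain ⟨i, rfl⟩ := this
        exact h i
      · intro h i
        refine h (e i) ?_
        have : e i ∈ Set.range e := Set.mem_range_self i
        rwa [hedef, Finset.range_orderEmbOfFin] at this
    rwa [hiInt]
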